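/- The price of anarchy of every n-player Shapley cost sharing game with submodular cost functions is at most n: if every C^r is submodular (C^r(X ∪ {i}) − C^r(X) ≥ C^r(Y ∪ {i}) − C^r(Y) for all X ⊆ Y ⊆ N, i ∈ N \ Y), nonnegative, nondecreasing, and C^r(∅) = 0, then every pure Nash equilibrium P satisfies C(P) ≤ n · C(Q) for every strategy vector Q. -/
import Mathlib


open Finset

def preSet {N : Type*} [DecidableEq N] (S : Finset N)
    (π : {x // x ∈ S} ≃ Fin S.card) (i : {x // x ∈ S}) : Finset N :=
  (S.attach.filter (fun j => π j < π i)).image Subtype.val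

noncomputable def shapley {N : Type*} [DecidableEq N]
    (C : Finset N → ℝ) (S : Finset N) (i : N) : ℝ :=
  if hi : i ∈ S then
    (1 / (Nat.factorial S.card : ℝ)) *
      ∑ π : {x // x ∈ S} ≃ Fin S.card,
        (C (preSet S π ⟨i, hi⟩ ∪ {i}) - C (preSet S π ⟨i, hi⟩))
  else 0

/-- `users P r = P^r = {i : r ∈ P_i}`, the set of players using resource `r`. -/
def users {n : ℕ} {R : Type*} [DecidableEq R]
    (P : Fin n → Finset R) (r : R) : Finset (Fin n) :=
  Finset.univ.filter (fun i => r ∈ P i)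

/-- The private cost of player `i` under Shapley cost sharing:
`C_i(P) = Σ_{r ∈ P_i} φ_i(C^r, P^r)`. -/
noncomputable def privCost {n : ℕ} {R : Type*} [DecidableEq R]
    (Cr : R → Finset (Fin n) → ℝ) (P : Fin n → Finset R) (i : Fin n) : ℝ :=
  ∑ r ∈ P i, shapley (Cr r) (users P r) i

/-- The social cost `C(P) = Σ_{r ∈ R} C^r(P^r)`. -/
noncomputable def socCost {n : ℕ} {R : Type*} [Fintype R] [DecidableEq R]
    (Cr : R → Finset (Fin n) → ℝ) (P : Fin n → Finset R) : ℝ :=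
  ∑ r : R, Cr r (users P r)

/-- The Shapley potential
`Φ(P) = Σ_{r ∈ R} Σ_{∅ ≠ T ⊆ P^r} ((|P^r|-|T|)!(|T|-1)!/|P^r|!) · C^r(T)`. -/
noncomputable def pot {n : ℕ} {R : Type*} [Fintype R] [DecidableEq R]
    (Cr : R → Finset (Fin n) → ℝ) (P : Fin n → Finset R) : ℝ :=
  ∑ r : R, ∑ T ∈ (users P r).powerset.filter (fun T => T.Nonempty),
    ((Nat.factorial ((users P r).card - T.card) : ℝ) *
        (Nat.factorial (T.card - 1) : ℝ) / (Nat.factorial (users P r).card : ℝ)) *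
      Cr r T

/-- `P` is a pure Nash equilibrium of the Shapley cost sharing game. -/
def isPNE {n : ℕ} {R : Type*} [DecidableEq R]
    (Strat : Fin n → Set (Finset R)) (Cr : R → Finset (Fin n) → ℝ)
    (P : Fin n → Finset R) : Prop :=
  (∀ i, P i ∈ Strat i) ∧
    ∀ i, ∀ Q ∈ Strat i, privCost Cr P i ≤ privCost Cr (Function.update P i Q) i

/-- `H_k`, the `k`-th harmonicNum number. -/
noncomputable def harmonicNum (k : ℕ) : ℝ := ∑ l ∈ Finset.Icc 1 k, (1 / (l : ℝ))


lemma notMem_preSet {N : Type*} [DecidableEq N] (S : Finset N)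
    (π : {x // x ∈ S} ≃ Fin S.card) (i : {x // x ∈ S}) : (i : N) ∉ preSet S π i := by
  simp only [preSet, mem_image, mem_filter, not_exists]
  rintro j ⟨⟨-, hlt⟩, hval⟩
  have : j = i := Subtype.ext hval
  subst this
  exact lt_irrefl _ hlt

lemma preSet_union {N : Type*} [DecidableEq N] (S : Finset N)
    (π : {x // x ∈ S} ≃ Fin S.card) (i : {x // x ∈ S}) :
    preSet S π i ∪ {(i : N)} =
      (S.attach.filter (fun j => ((π j : ℕ) < (π i : ℕ) + 1))).image Subtype.val := by
  ext a
  simp only [preSet, mem_union, mem_singleton, mem_image, mem_filter, mem_attach, true_and]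
  constructor
  · rintro (⟨j, hj, rfl⟩ | rfl)
    · exact ⟨j, by omega, rfl⟩
    · exact ⟨i, by omega, rfl⟩
  · rintro ⟨j, hj, rfl⟩
    rcases eq_or_lt_of_le (Nat.lt_succ_iff.mp hj) with h | h
    · right
      have : π j = π i := Fin.ext h
      rw [π.injective this]
    · exact Or.inl ⟨j, h, rfl⟩

lemma telescope {N : Type*} [DecidableEq N] (C : Finset N → ℝ) (h0 : C ∅ = 0)
    (S : Finset N) (π : {x // x ∈ S} ≃ Fin S.card) :
    ∑ i ∈ S.attach, (C (preSet S π i ∪ {(i : N)}) - C (preSet S π i)) = C S := by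
  set f : ℕ → ℝ := fun m => C ((S.attach.filter (fun j => ((π j : ℕ) < m))).image Subtype.val)
    with hf
  have key : ∀ i ∈ S.attach,
      C (preSet S π i ∪ {(i : N)}) - C (preSet S π i) = f ((π i : ℕ) + 1) - f (π i : ℕ) := by
    intro i _
    rw [preSet_union]
    rfl
  rw [Finset.sum_congr rfl key, ← Finset.univ_eq_attach]
  have := Equiv.sum_comp π (fun k : Fin S.card => f ((k : ℕ) + 1) - f (k : ℕ))
  rw [this, Fin.sum_univ_eq_sum_range (fun k => f (k + 1) - f k), Finset.sum_range_sub]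
  have hA : f S.card = C S := by
    simp only [hf]
    rw [Finset.filter_true_of_mem (fun j _ => (π j).isLt), Finset.attach_image_val]
  have hB : f 0 = 0 := by
    simp only [hf]
    rw [Finset.filter_false_of_mem (fun j _ => by omega)]
    simpa using h0
  rw [hA, hB, sub_zero]

lemma card_equiv_fact {N : Type*} [DecidableEq N] (S : Finset N) :
    Fintype.card ({x // x ∈ S} ≃ Fin S.card) = Nat.factorial S.card := by
  rw [Fintype.card_equiv (Fintype.equivFinOfCardEq (Fintype.card_coe S)),
    Fintype.card_coe]

lemma shapley_eff {N : Type*} [DecidableEq N] (C : Finset N → ℝ) (h0 : C ∅ = 0)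
    (S : Finset N) : ∑ i ∈ S, shapley C S i = C S := by
  rw [← Finset.sum_attach S (fun i => shapley C S i)]
  have : ∀ i ∈ S.attach, shapley C S (i : N) =
      (1 / (Nat.factorial S.card : ℝ)) *
        ∑ π : {x // x ∈ S} ≃ Fin S.card,
          (C (preSet S π i ∪ {(i : N)}) - C (preSet S π i)) := by
    intro i _
    rw [shapley, dif_pos i.2]
  rw [Finset.sum_congr rfl this, ← Finset.mul_sum, Finset.sum_comm]
  have : ∀ π ∈ (Finset.univ : Finset ({x // x ∈ S} ≃ Fin S.card)),
      ∑ i ∈ S.attach, (C (preSet S π i ∪ {(i : N)}) - C (preSet S π i)) = C S :=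
    fun π _ => telescope C h0 S π
  rw [Finset.sum_congr rfl this, Finset.sum_const, Finset.card_univ, card_equiv_fact,
    nsmul_eq_mul]
  have hfac : (Nat.factorial S.card : ℝ) ≠ 0 := Nat.cast_ne_zero.mpr (Nat.factorial_ne_zero _)
  field_simp

lemma shapley_le {N : Type*} [DecidableEq N] (C : Finset N → ℝ) (h0 : C ∅ = 0)
    (hsub : ∀ (X Y : Finset N) (i : N), X ⊆ Y → i ∉ Y →
      C (insert i Y) - C Y ≤ C (insert i X) - C X)
    (S : Finset N) (i : N) (hi : i ∈ S) : shapley C S i ≤ C {i} := by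
  rw [shapley, dif_pos hi]
  have hterm : ∀ π ∈ (Finset.univ : Finset ({x // x ∈ S} ≃ Fin S.card)),
      C (preSet S π ⟨i, hi⟩ ∪ {i}) - C (preSet S π ⟨i, hi⟩) ≤ C {i} := by
    intro π _
    have h1 : preSet S π ⟨i, hi⟩ ∪ {i} = insert i (preSet S π ⟨i, hi⟩) := by
      rw [Finset.union_comm, Finset.insert_eq]
    have h2 := hsub ∅ (preSet S π ⟨i, hi⟩) i (Finset.empty_subset _)
      (notMem_preSet S π ⟨i, hi⟩)
    rw [h1]
    calc C (insert i (preSet S π ⟨i, hi⟩)) - C (preSet S π ⟨i, hi⟩)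
        ≤ C (insert i ∅) - C ∅ := h2
      _ = C {i} := by simp [h0]
  have hsum := Finset.sum_le_card_nsmul _ _ _ hterm
  rw [Finset.card_univ, card_equiv_fact, nsmul_eq_mul] at hsum
  have hfac : (0:ℝ) < (Nat.factorial S.card : ℝ) := by positivity
  calc (1 / (Nat.factorial S.card : ℝ)) * ∑ π : {x // x ∈ S} ≃ Fin S.card,
        (C (preSet S π ⟨i, hi⟩ ∪ {i}) - C (preSet S π ⟨i, hi⟩))
      ≤ (1 / (Nat.factorial S.card : ℝ)) * ((Nat.factorial S.card : ℝ) * C {i}) := by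
        apply mul_le_mul_of_nonneg_left hsum; positivity
    _ = C {i} := by field_simp

lemma sum_swap_users {n : ℕ} {R : Type*} [Fintype R] [DecidableEq R]
    (P : Fin n → Finset R) (g : R → Fin n → ℝ) :
    ∑ i : Fin n, ∑ r ∈ P i, g r i = ∑ r : R, ∑ i ∈ users P r, g r i := by
  rw [Finset.sum_comm' (s := Finset.univ) (t := fun i => P i) (t' := Finset.univ)
    (s' := fun r => users P r)]
  intro i r
  simp [users]

/-- The price of anarchy of Shapley cost sharing games with submodular costs
is at most `n`. -/
theorem poa_shapley_submodular {n : ℕ} {R : Type*} [Fintype R] [DecidableEq R]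
    (Strat : Fin n → Set (Finset R)) (Cr : R → Finset (Fin n) → ℝ)
    (hC0 : ∀ r, Cr r ∅ = 0)
    (hnn : ∀ r T, 0 ≤ Cr r T)
    (hmono : ∀ r (T U : Finset (Fin n)), T ⊆ U → Cr r T ≤ Cr r U)
    (hsub : ∀ r (X Y : Finset (Fin n)) (i : Fin n), X ⊆ Y → i ∉ Y →
      Cr r (insert i Y) - Cr r Y ≤ Cr r (insert i X) - Cr r X)
    (P : Fin n → Finset R) (hP : isPNE Strat Cr P)
    (Q : Fin n → Finset R) (hQ : ∀ i, Q i ∈ Strat i) :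
    socCost Cr P ≤ (n : ℝ) * socCost Cr Q := by
  have eff : socCost Cr P = ∑ i : Fin n, privCost Cr P i := by
    simp only [privCost, socCost]
    rw [sum_swap_users P (fun r i => shapley (Cr r) (users P r) i)]
    exact Finset.sum_congr rfl fun r _ => (shapley_eff (Cr r) (hC0 r) (users P r)).symm
  have dev : ∀ i : Fin n, privCost Cr P i ≤ ∑ r ∈ Q i, Cr r {i} := by
    intro i
    refine le_trans (hP.2 i (Q i) (hQ i)) ?_
    rw [privCost]
    have hupd : Function.update P i (Q i) i = Q i := Function.update_self i (Q i) P
    rw [hupd]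
    apply Finset.sum_le_sum
    intro r hr
    apply shapley_le (Cr r) (hC0 r) (fun X Y j => hsub r X Y j)
    simp [users, hupd, hr]
  have single : ∀ i : Fin n, ∑ r ∈ Q i, Cr r {i} ≤ ∑ r ∈ Q i, Cr r (users Q r) := by
    intro i
    apply Finset.sum_le_sum
    intro r hr
    apply hmono
    intro j hj
    simp only [Finset.mem_singleton] at hj
    subst hj
    simp [users, hr]
  calc socCost Cr P = ∑ i : Fin n, privCost Cr P i := eff
    _ ≤ ∑ i : Fin n, ∑ r ∈ Q i, Cr r {i} := Finset.sum_le_sum fun i _ => dev i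
    _ ≤ ∑ i : Fin n, ∑ r ∈ Q i, Cr r (users Q r) := Finset.sum_le_sum fun i _ => single i
    _ = ∑ r : R, ∑ i ∈ users Q r, Cr r (users Q r) :=
        sum_swap_users Q (fun r _ => Cr r (users Q r))
    _ = ∑ r : R, ((users Q r).card : ℝ) * Cr r (users Q r) := by
        simp [Finset.sum_const, nsmul_eq_mul]
    _ ≤ ∑ r : R, (n : ℝ) * Cr r (users Q r) := by
        apply Finset.sum_le_sum
        intro r _
        apply mul_le_mul_of_nonneg_right _ (hnn r _)
        exact_mod_cast (Finset.card_le_univ _).trans_eq (by simp)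
    _ = (n : ℝ) * socCost Cr Q := by rw [socCost, Finset.mul_sum]
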